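/- Let E_Z > 0 and let l be an integer with 2^l ≤ E_Z. Then the binary entropy of p̃_l = 1/(1 + e^{2^l/E_Z}) satisfies H(p̃_l) ≥ 1 - log₂(e)·2^l/E_Z (equivalently, H(p̃_l) ≥ 1 - log₂(e)·2^{l-η} where η = log₂(E_Z)). -/

import Mathlib

/-- The binary entropy function (base 2): `H(p) = -p log₂ p - (1-p) log₂ (1-p)`. -/
noncomputable def binEnt (p : ℝ) : ℝ :=
  -(p * Real.logb 2 p) - (1 - p) * Real.logb 2 (1 - p)

/-- Lower bound on the entropy of a low-level binary digit of exponential noise with mean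
`E_Z`: if `2^l ≤ E_Z`, then `H(1/(1 + exp (2^l / E_Z))) ≥ 1 - log₂(e) 2^l / E_Z`. -/
theorem binEnt_noise_lower_bound (EZ : ℝ) (hEZ : 0 < EZ) (l : ℤ) (hl : (2 : ℝ) ^ l ≤ EZ) :
    1 - Real.logb 2 (Real.exp 1) * (2 : ℝ) ^ l / EZ ≤
      binEnt (1 / (1 + Real.exp (2 ^ l / EZ))) := by
  set x := (2:ℝ) ^ l / EZ with hxdef
  have hx0 : 0 < x := div_pos (zpow_pos (by norm_num) l) hEZ
  set E := Real.exp x with hEdef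
  have hE1 : 1 ≤ E := Real.one_le_exp hx0.le
  have hEpos : 0 < E := Real.exp_pos x
  have hS : 0 < 1 + E := by linarith
  have hL : 0 < Real.log 2 := Real.log_pos (by norm_num)
  have hp : (1:ℝ) - 1/(1+E) = E/(1+E) := by field_simp; ring
  have hlogp : Real.logb 2 (1/(1+E)) = -(Real.log (1+E) / Real.log 2) := by
    rw [Real.logb, Real.log_div one_ne_zero (ne_of_gt hS), Real.log_one]; ring
  have hlogq : Real.logb 2 (E/(1+E)) = (x - Real.log (1+E)) / Real.log 2 := by
    rw [Real.logb, Real.log_div (ne_of_gt hEpos) (ne_of_gt hS), hEdef, Real.log_exp]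
  have hcoef : Real.logb 2 (Real.exp 1) * (2:ℝ) ^ l / EZ = x / Real.log 2 := by
    rw [Real.logb, Real.log_exp, hxdef]; ring
  have hkey : Real.log 2 ≤ Real.log (1+E) :=
    Real.log_le_log (by norm_num) (by linarith)
  unfold binEnt
  rw [hp, hlogp, hlogq, hcoef]
  have hfrac : E * x / (1+E) ≤ x := by
    rw [div_le_iff₀ hS]; nlinarith
  have hRHS : -(1/(1+E) * -(Real.log (1+E) / Real.log 2)) -
      E/(1+E) * ((x - Real.log (1+E)) / Real.log 2)
      = (Real.log (1+E) - E * x / (1+E)) / Real.log 2 := by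
    field_simp
    ring
  rw [hRHS]
  have h1 : (1:ℝ) - x / Real.log 2 = (Real.log 2 - x) / Real.log 2 := by
    field_simp
  rw [h1, div_le_div_iff₀ hL hL]
  nlinarith
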